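/- Let n > 1 be an integer with prime factorization n = p_1^{a_1}···p_r^{a_r} (distinct primes p_i, each a_i ≥ 1), let τ(n) be the number of positive divisors of n, and let A(n) be the adjacency matrix of the modified divisor prime graph G*_Dp(n), with eigenvalues λ_1, …, λ_{τ(n)}. Then Σ_i |λ_i − 1/τ(n)| = Π_{i=1}^r √(4a_i + 1) + 1 − 2^r/τ(n). -/

import Mathlib

namespace MDPG

noncomputable def m (a : ℝ) : Fin 2 → ℝ :=
  fun i => (1 + (if i = 0 then 1 else -1) * Real.sqrt (4*a+1))/2

noncomputable def u (a : ℝ) (i : Fin 2) (k : ℕ) : ℝ := if k = 0 then m a i else 1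

variable {a : ℝ}

lemma sqrt_sq (ha : 1 ≤ a) : Real.sqrt (4*a+1)^2 = 4*a+1 := Real.sq_sqrt (by linarith)

lemma sqrt_ge (ha : 1 ≤ a) : 2 ≤ Real.sqrt (4*a+1) := by
  nlinarith [Real.sqrt_nonneg (4*a+1), sqrt_sq ha]

lemma m_zero : m a 0 = (1 + Real.sqrt (4*a+1))/2 := by simp [m]

lemma m_one : m a 1 = (1 - Real.sqrt (4*a+1))/2 := by
  simp [m]; ring

lemma m_sum : m a 0 + m a 1 = 1 := by rw [m_zero, m_one]; ring

lemma m_prod (ha : 1 ≤ a) : m a 0 * m a 1 = -a := by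
  rw [m_zero, m_one]
  have := sqrt_sq ha
  nlinarith [this]

lemma m_sq (ha : 1 ≤ a) : ∀ i : Fin 2, (m a i)^2 = m a i + a := by
  have h := sqrt_sq ha
  rw [Fin.forall_fin_two]
  constructor
  · rw [m_zero]; nlinarith
  · rw [m_one]; nlinarith

lemma m_pos (ha : 1 ≤ a) : 0 < m a 0 := by
  rw [m_zero]; have := sqrt_ge ha; linarith

lemma m_neg (ha : 1 ≤ a) : m a 1 < 0 := by
  rw [m_one]; have := sqrt_ge ha; linarith

lemma N2_pos (ha : 1 ≤ a) (i : Fin 2) : (0:ℝ) < (m a i)^2 + a := by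
  nlinarith [sq_nonneg (m a i)]

lemma abs_sum (ha : 1 ≤ a) : |m a 0| + |m a 1| = Real.sqrt (4*a+1) := by
  rw [abs_of_pos (m_pos ha), abs_of_neg (m_neg ha), m_zero, m_one]; ring

lemma abs_mul_ge (ha : 1 ≤ a) : ∀ i : Fin 2, 1 ≤ |m a i| * (a+1) := by
  have h := sqrt_ge ha
  rw [Fin.forall_fin_two]
  constructor
  · rw [abs_of_pos (m_pos ha), m_zero]; nlinarith
  · rw [abs_of_neg (m_neg ha), m_one]; nlinarith

lemma gram (ha : 1 ≤ a) (i j : Fin 2) :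
    m a i * m a j + a = if i = j then (m a i)^2 + a else 0 := by
  fin_cases i <;> fin_cases j <;> simp
  · ring
  · rw [m_prod ha]; ring
  · rw [mul_comm, m_prod ha]; ring
  · ring

lemma spec (ha : 1 ≤ a) (k l : ℕ) :
    (∑ i : Fin 2, m a i * u a i k * u a i l / ((m a i)^2 + a)) =
      if (k = 0 ∨ l = 0) then (1:ℝ) else 0 := by
  have h0 := (N2_pos ha 0).ne'
  have h1 := (N2_pos ha 1).ne'
  have hs := m_sum (a := a)
  have hp := m_prod ha
  rw [Fin.sum_univ_two]
  by_cases hk : k = 0 <;> by_cases hl : l = 0 <;>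
    simp only [u, hk, hl, if_true, if_false, if_pos, if_neg, mul_one, true_or, or_true, false_or, or_false, ↓reduceIte] <;>
    field_simp
  · linear_combination (-a + (m a 0)^3 + (m a 1)^3 - (m a 0)^2 - (m a 1)^2
      + m a 0 * m a 1) * hp + (-(m a 0 * m a 1) * (m a 0 - m a 1)^2) * hs
  · linear_combination (m a 0 * m a 1 - a) * hp
  · linear_combination (m a 0 * m a 1 - a) * hp
  · linear_combination (m a 0 + m a 1) * hp

lemma u_ne_zero (i : Fin 2) {k : ℕ} (hk : k ≠ 0) : u a i k = u a i 1 := by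
  simp [u, hk]

lemma spec' (ha : 1 ≤ a) (k l : ℕ) :
    (∑ i : Fin 2, u a i k * (m a i * u a i l / ((m a i)^2 + a))) =
      if (k = 0 ∨ l = 0) then (1:ℝ) else 0 := by
  rw [← spec ha k l]
  exact Finset.sum_congr rfl fun i _ => by ring

lemma wgram (ha : 1 ≤ a) (i j : Fin 2) :
    m a i * u a i 0 / ((m a i)^2 + a) * u a j 0 +
      a * (m a i * u a i 1 / ((m a i)^2 + a) * u a j 1) = if i = j then m a i else 0 := by
  have hN := (N2_pos ha i).ne'
  have hg := gram ha i j
  simp only [u, if_pos rfl, if_neg (one_ne_zero), mul_one, ↓reduceIte]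
  by_cases h : i = j
  · subst h
    rw [if_pos rfl] at hg ⊢
    field_simp
  · rw [if_neg h] at hg ⊢
    field_simp
    linear_combination (m a i) * hg

lemma wgram_sum (ha : 1 ≤ a) (A : ℕ) (hA : (A:ℝ) = a) (i j : Fin 2) :
    ∑ t : Fin (A+1), (m a i * u a i t.val / ((m a i)^2 + a) * u a j t.val)
      = if i = j then m a i else 0 := by
  rw [Fin.sum_univ_succ]
  have h1 : ∀ t : Fin A, (m a i * u a i ((t.succ : Fin (A+1))).val / ((m a i)^2 + a) *
      u a j ((t.succ : Fin (A+1))).val)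
      = (m a i * u a i 1 / ((m a i)^2 + a) * u a j 1) := fun t => by
    rw [u_ne_zero _ (by simp), u_ne_zero (a := a) j (by simp)]
  rw [Finset.sum_congr rfl (fun t _ => h1 t), Finset.sum_const, Finset.card_univ,
    Fintype.card_fin, nsmul_eq_mul, hA]
  have h0 : ((0 : Fin (A+1))).val = 0 := rfl
  rw [h0]
  exact wgram ha i j

lemma m_sign (ha : 1 ≤ a) : ∀ i : Fin 2,
    m a i = (if i = 0 then (1:ℝ) else -1) * |m a i| := by
  rw [Fin.forall_fin_two]
  constructor
  · rw [if_pos rfl, abs_of_pos (m_pos ha), one_mul]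
  · rw [if_neg (by decide), abs_of_neg (m_neg ha)]; ring

lemma sum_fin (A : ℕ) (f : ℕ → ℝ) (hf : ∀ k, k ≠ 0 → f k = f 1) :
    ∑ t : Fin (A+1), f t.val = f 0 + A * f 1 := by
  rw [Fin.sum_univ_succ]
  simp only [Fin.val_zero]
  congr 1
  rw [Finset.sum_congr rfl (fun t _ => hf _ (by simp [Fin.val_succ])), Finset.sum_const,
    Finset.card_univ, Fintype.card_fin, nsmul_eq_mul]

variable {n : ℕ}

lemma exp_lt (hn : n ≠ 0) {d : ℕ} (hd : d ∈ n.divisors) (p : ℕ) :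
    d.factorization p < n.factorization p + 1 := by
  have hdvd : d ∣ n := Nat.dvd_of_mem_divisors hd
  have hd0 : d ≠ 0 := by
    rintro rfl
    exact hn (Nat.eq_zero_of_zero_dvd hdvd)
  have h := (Nat.factorization_le_iff_dvd hd0 hn).mpr hdvd
  exact Nat.lt_succ_of_le (h p)

noncomputable def Phi (n : ℕ) (hn : n ≠ 0) (d : {d : ℕ // d ∈ n.divisors}) :
    ∀ p : {p : ℕ // p ∈ n.primeFactors}, Fin (n.factorization p.1 + 1) :=
  fun p => ⟨(d : ℕ).factorization p.1, exp_lt hn d.2 p.1⟩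

lemma Phi_bijective (hn : n ≠ 0) : Function.Bijective (Phi n hn) := by
  rw [Fintype.bijective_iff_injective_and_card]
  constructor
  · intro d d' h
    have hd0 : (d : ℕ) ≠ 0 := (Nat.pos_of_mem_divisors d.2).ne'
    have hd'0 : (d' : ℕ) ≠ 0 := (Nat.pos_of_mem_divisors d'.2).ne'
    apply Subtype.ext
    apply Nat.factorization_inj hd0 hd'0
    ext q
    by_cases hq : q ∈ n.primeFactors
    · have := congrFun h ⟨q, hq⟩
      exact congrArg Fin.val this
    · have hz : ∀ e : ℕ, e ∣ n → e.factorization q = 0 := by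
        intro e he
        by_contra hne
        have hqp : q.Prime := Nat.prime_of_mem_primeFactors
          (Nat.support_factorization e ▸ Finsupp.mem_support_iff.mpr hne)
        exact hq (Nat.mem_primeFactors.mpr
          ⟨hqp, dvd_trans (Nat.dvd_of_factorization_pos hne) he, hn⟩)
      rw [hz _ (Nat.dvd_of_mem_divisors d.2), hz _ (Nat.dvd_of_mem_divisors d'.2)]
  · rw [Fintype.card_coe, Nat.card_divisors hn, Fintype.card_pi]
    rw [← Finset.prod_coe_sort n.primeFactors (fun p => n.factorization p + 1)]
    exact Finset.prod_congr rfl fun p _ => (Fintype.card_fin _).symm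

lemma coprime_iff (hn : n ≠ 0) (d d' : {d : ℕ // d ∈ n.divisors}) :
    Nat.gcd (d : ℕ) (d' : ℕ) = 1 ↔
      ∀ p : {p : ℕ // p ∈ n.primeFactors},
        (d : ℕ).factorization p.1 = 0 ∨ (d' : ℕ).factorization p.1 = 0 := by
  have hd0 : (d : ℕ) ≠ 0 := (Nat.pos_of_mem_divisors d.2).ne'
  have hd'0 : (d' : ℕ) ≠ 0 := (Nat.pos_of_mem_divisors d'.2).ne'
  constructor
  · intro h p
    by_contra hc
    push_neg at hc
    have hp : (p : ℕ).Prime := Nat.prime_of_mem_primeFactors p.2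
    have h1 : (p : ℕ) ∣ (d : ℕ) := Nat.dvd_of_factorization_pos hc.1
    have h2 : (p : ℕ) ∣ (d' : ℕ) := Nat.dvd_of_factorization_pos hc.2
    have := Nat.dvd_gcd h1 h2
    rw [h] at this
    exact hp.one_lt.ne' (Nat.eq_one_of_dvd_one this)
  · intro h
    by_contra hg
    obtain ⟨q, hq, hqd⟩ := Nat.exists_prime_and_dvd hg
    have hqd1 : q ∣ (d : ℕ) := hqd.trans (Nat.gcd_dvd_left _ _)
    have hqd2 : q ∣ (d' : ℕ) := hqd.trans (Nat.gcd_dvd_right _ _)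
    have hqn : q ∈ n.primeFactors :=
      Nat.mem_primeFactors.mpr ⟨hq, hqd1.trans (Nat.dvd_of_mem_divisors d.2), hn⟩
    rcases h ⟨q, hqn⟩ with h0 | h0
    · exact ((hq.factorization_pos_of_dvd hd0 hqd1).ne' h0).elim
    · exact ((hq.factorization_pos_of_dvd hd'0 hqd2).ne' h0).elim

end MDPG
set_option maxHeartbeats 2000000 in

theorem energy_modifiedDivisorPrimeGraph (n : ℕ) (hn : 1 < n)
    (A : Matrix {d : ℕ // d ∈ n.divisors} {d : ℕ // d ∈ n.divisors} ℝ)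
    (hA : ∀ u v : {d : ℕ // d ∈ n.divisors},
      A u v = if Nat.gcd u.1 v.1 = 1 then 1 else 0)
    (hHerm : A.IsHermitian) :
    ∑ i, |hHerm.eigenvalues i - 1 / (n.divisors.card : ℝ)| =
      (∏ p ∈ n.primeFactors, Real.sqrt (4 * (n.factorization p : ℝ) + 1)) + 1 -
        (2 : ℝ) ^ n.primeFactors.card / (n.divisors.card : ℝ) := by
  classical
  have hn0 : n ≠ 0 := by omega
  set τ := n.divisors.card with hτdef
  set r := n.primeFactors.card with hrdef
  have hfac : ∀ p : {p : ℕ // p ∈ n.primeFactors}, (1:ℝ) ≤ ((n.factorization p.1 : ℕ) : ℝ) := by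
    intro p
    have h1 : 0 < n.factorization p.1 :=
      (Nat.prime_of_mem_primeFactors p.2).factorization_pos_of_dvd hn0
        (Nat.dvd_of_mem_primeFactors p.2)
    exact_mod_cast h1
  set U : Matrix {d : ℕ // d ∈ n.divisors} ({p : ℕ // p ∈ n.primeFactors} → Fin 2) ℝ :=
    Matrix.of fun d ε => ∏ p, MDPG.u (n.factorization p.1 : ℝ) (ε p)
      ((d : ℕ).factorization p.1) with hU
  set W : Matrix ({p : ℕ // p ∈ n.primeFactors} → Fin 2) {d : ℕ // d ∈ n.divisors} ℝ :=
    Matrix.of fun ε d => ∏ p, (MDPG.m (n.factorization p.1 : ℝ) (ε p) *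
      MDPG.u (n.factorization p.1 : ℝ) (ε p) ((d : ℕ).factorization p.1) /
      ((MDPG.m (n.factorization p.1 : ℝ) (ε p))^2 + (n.factorization p.1 : ℝ))) with hW
  set lam : ({p : ℕ // p ∈ n.primeFactors} → Fin 2) → ℝ :=
    fun ε => ∏ p, MDPG.m (n.factorization p.1 : ℝ) (ε p) with hlam
  -- A = U * W
  have hUW : U * W = A := by
    ext d d'
    rw [Matrix.mul_apply, hA d d']
    calc ∑ ε, U d ε * W ε d'
        = ∑ ε : {p : ℕ // p ∈ n.primeFactors} → Fin 2,
            ∏ p, (MDPG.u (n.factorization p.1 : ℝ) (ε p) ((d : ℕ).factorization p.1) *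
              (MDPG.m (n.factorization p.1 : ℝ) (ε p) *
               MDPG.u (n.factorization p.1 : ℝ) (ε p) ((d' : ℕ).factorization p.1) /
               ((MDPG.m (n.factorization p.1 : ℝ) (ε p))^2 + (n.factorization p.1 : ℝ)))) := by
          refine Finset.sum_congr rfl fun ε _ => ?_
          rw [hU, hW, Matrix.of_apply, Matrix.of_apply, ← Finset.prod_mul_distrib]
      _ = ∏ p : {p : ℕ // p ∈ n.primeFactors}, ∑ i : Fin 2,
            (MDPG.u (n.factorization p.1 : ℝ) i ((d : ℕ).factorization p.1) *
              (MDPG.m (n.factorization p.1 : ℝ) i *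
               MDPG.u (n.factorization p.1 : ℝ) i ((d' : ℕ).factorization p.1) /
               ((MDPG.m (n.factorization p.1 : ℝ) i)^2 + (n.factorization p.1 : ℝ)))) :=
          (Fintype.prod_sum (κ := fun _ : {p : ℕ // p ∈ n.primeFactors} => Fin 2)
            (fun p i => MDPG.u (n.factorization p.1 : ℝ) i ((d : ℕ).factorization p.1) *
              (MDPG.m (n.factorization p.1 : ℝ) i *
               MDPG.u (n.factorization p.1 : ℝ) i ((d' : ℕ).factorization p.1) /
               ((MDPG.m (n.factorization p.1 : ℝ) i)^2 + (n.factorization p.1 : ℝ))))).symm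
      _ = ∏ p : {p : ℕ // p ∈ n.primeFactors},
            (if ((d : ℕ).factorization p.1 = 0 ∨ (d' : ℕ).factorization p.1 = 0)
              then (1:ℝ) else 0) :=
          Finset.prod_congr rfl fun p _ => MDPG.spec' (hfac p) _ _
      _ = if Nat.gcd (d : ℕ) (d' : ℕ) = 1 then 1 else 0 := by
          rw [Finset.prod_boole]
          by_cases hgcd : Nat.gcd (d : ℕ) (d' : ℕ) = 1
          · rw [if_pos hgcd, if_pos]
            intro p _
            exact (MDPG.coprime_iff hn0 d d').mp hgcd p
          · rw [if_neg hgcd, if_neg]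
            intro hall
            exact hgcd ((MDPG.coprime_iff hn0 d d').mpr fun p => hall p (Finset.mem_univ p))
  -- W * U = diagonal lam
  have hWU : W * U = Matrix.diagonal lam := by
    ext ε ε'
    rw [Matrix.mul_apply, Matrix.diagonal_apply]
    calc ∑ d, W ε d * U d ε'
        = ∑ d : {d : ℕ // d ∈ n.divisors},
            ∏ p, (MDPG.m (n.factorization p.1 : ℝ) (ε p) *
               MDPG.u (n.factorization p.1 : ℝ) (ε p) ((d : ℕ).factorization p.1) /
               ((MDPG.m (n.factorization p.1 : ℝ) (ε p))^2 + (n.factorization p.1 : ℝ)) *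
              MDPG.u (n.factorization p.1 : ℝ) (ε' p) ((d : ℕ).factorization p.1)) := by
          refine Finset.sum_congr rfl fun d _ => ?_
          rw [hU, hW, Matrix.of_apply, Matrix.of_apply, ← Finset.prod_mul_distrib]
      _ = ∑ k : (∀ p : {p : ℕ // p ∈ n.primeFactors}, Fin (n.factorization p.1 + 1)),
            ∏ p, (MDPG.m (n.factorization p.1 : ℝ) (ε p) *
               MDPG.u (n.factorization p.1 : ℝ) (ε p) (k p).val /
               ((MDPG.m (n.factorization p.1 : ℝ) (ε p))^2 + (n.factorization p.1 : ℝ)) *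
              MDPG.u (n.factorization p.1 : ℝ) (ε' p) (k p).val) :=
          Fintype.sum_bijective (MDPG.Phi n hn0) (MDPG.Phi_bijective hn0)
            (fun d => ∏ p, (MDPG.m (n.factorization p.1 : ℝ) (ε p) *
               MDPG.u (n.factorization p.1 : ℝ) (ε p) ((d : ℕ).factorization p.1) /
               ((MDPG.m (n.factorization p.1 : ℝ) (ε p))^2 + (n.factorization p.1 : ℝ)) *
              MDPG.u (n.factorization p.1 : ℝ) (ε' p) ((d : ℕ).factorization p.1)))
            (fun k => ∏ p, (MDPG.m (n.factorization p.1 : ℝ) (ε p) *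
               MDPG.u (n.factorization p.1 : ℝ) (ε p) (k p).val /
               ((MDPG.m (n.factorization p.1 : ℝ) (ε p))^2 + (n.factorization p.1 : ℝ)) *
              MDPG.u (n.factorization p.1 : ℝ) (ε' p) (k p).val))
            (fun d => rfl)
      _ = ∏ p : {p : ℕ // p ∈ n.primeFactors}, ∑ t : Fin (n.factorization p.1 + 1),
            (MDPG.m (n.factorization p.1 : ℝ) (ε p) *
               MDPG.u (n.factorization p.1 : ℝ) (ε p) t.val /
               ((MDPG.m (n.factorization p.1 : ℝ) (ε p))^2 + (n.factorization p.1 : ℝ)) *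
              MDPG.u (n.factorization p.1 : ℝ) (ε' p) t.val) :=
          (Fintype.prod_sum (κ := fun p : {p : ℕ // p ∈ n.primeFactors} =>
              Fin (n.factorization p.1 + 1))
            (fun p t => MDPG.m (n.factorization p.1 : ℝ) (ε p) *
               MDPG.u (n.factorization p.1 : ℝ) (ε p) t.val /
               ((MDPG.m (n.factorization p.1 : ℝ) (ε p))^2 + (n.factorization p.1 : ℝ)) *
              MDPG.u (n.factorization p.1 : ℝ) (ε' p) t.val)).symm
      _ = ∏ p : {p : ℕ // p ∈ n.primeFactors},
            (if ε p = ε' p then MDPG.m (n.factorization p.1 : ℝ) (ε p) else 0) :=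
          Finset.prod_congr rfl fun p _ =>
            MDPG.wgram_sum (hfac p) (n.factorization p.1) rfl (ε p) (ε' p)
      _ = if ε = ε' then lam ε else 0 := by
          by_cases h : ε = ε'
          · subst h
            rw [if_pos rfl, hlam]
            exact Finset.prod_congr rfl fun p _ => if_pos rfl
          · rw [if_neg h]
            obtain ⟨p, hp⟩ := Function.ne_iff.mp h
            exact Finset.prod_eq_zero (Finset.mem_univ p) (if_neg hp)
  -- cardinalities
  have cardE : Fintype.card ({p : ℕ // p ∈ n.primeFactors} → Fin 2) = 2^r := by
    rw [Fintype.card_fun, Fintype.card_fin, Fintype.card_coe]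
  have cardD : Fintype.card {d : ℕ // d ∈ n.divisors} = τ := Fintype.card_coe _
  have hτprod : τ = ∏ p ∈ n.primeFactors, (n.factorization p + 1) := by
    rw [hτdef]; exact Nat.card_divisors hn0
  have h2r : 2^r ≤ τ := by
    rw [hτprod, hrdef]
    calc (2:ℕ)^n.primeFactors.card = ∏ _p ∈ n.primeFactors, 2 :=
          (Finset.prod_const 2).symm
      _ ≤ ∏ p ∈ n.primeFactors, (n.factorization p + 1) := by
          refine Finset.prod_le_prod' ?_
          intro p hp
          have := (Nat.prime_of_mem_primeFactors hp).factorization_pos_of_dvd hn0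
            (Nat.dvd_of_mem_primeFactors hp)
          omega
  have hτpos : 0 < τ := by
    rw [hτdef]
    exact Finset.card_pos.mpr ⟨n, Nat.mem_divisors_self n hn0⟩
  have hτne : (τ:ℝ) ≠ 0 := Nat.cast_ne_zero.mpr hτpos.ne'
  have hcpos : (0:ℝ) < 1/(τ:ℝ) := by positivity
  -- determinant of x•1 - A via U, W
  have hdet : ∀ x : ℝ, x ≠ 0 →
      (x • (1 : Matrix {d : ℕ // d ∈ n.divisors} {d : ℕ // d ∈ n.divisors} ℝ) - A).det
        = x ^ (τ - 2^r) * ∏ ε, (x - lam ε) := by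
    intro x hx
    have e1 : x • (1 : Matrix {d : ℕ // d ∈ n.divisors} {d : ℕ // d ∈ n.divisors} ℝ) - A
        = x • ((1 : Matrix {d : ℕ // d ∈ n.divisors} {d : ℕ // d ∈ n.divisors} ℝ)
            - U * (x⁻¹ • W)) := by
      rw [smul_sub, ← hUW, Matrix.mul_smul, smul_smul, mul_inv_cancel₀ hx, one_smul]
    rw [e1, Matrix.det_smul, Matrix.det_one_sub_mul_comm, Matrix.smul_mul, hWU, cardD]
    have e2 : (1 : Matrix ({p : ℕ // p ∈ n.primeFactors} → Fin 2)
          ({p : ℕ // p ∈ n.primeFactors} → Fin 2) ℝ) - x⁻¹ • Matrix.diagonal lam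
        = Matrix.diagonal (fun ε => 1 - x⁻¹ * lam ε) := by
      rw [← Matrix.diagonal_one, ← Matrix.diagonal_smul, ← Matrix.diagonal_sub]
      congr 1
    rw [e2, Matrix.det_diagonal]
    have e3 : ∏ ε, (x - lam ε)
        = ∏ ε : {p : ℕ // p ∈ n.primeFactors} → Fin 2, (x * (1 - x⁻¹ * lam ε)) :=
      Finset.prod_congr rfl fun ε _ => by field_simp
    rw [e3, Finset.prod_mul_distrib, Finset.prod_const, Finset.card_univ, cardE,
      ← pow_sub_mul_pow x h2r]
    ring
  -- determinant of x•1 - A via spectral theorem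
  have hspec : ∀ x : ℝ,
      (x • (1 : Matrix {d : ℕ // d ∈ n.divisors} {d : ℕ // d ∈ n.divisors} ℝ) - A).det
        = ∏ i, (x - hHerm.eigenvalues i) := by
    intro x
    set V : Matrix {d : ℕ // d ∈ n.divisors} {d : ℕ // d ∈ n.divisors} ℝ :=
      (hHerm.eigenvectorUnitary : Matrix {d : ℕ // d ∈ n.divisors} {d : ℕ // d ∈ n.divisors} ℝ)
      with hVdef
    have hVU : V * star V = 1 := Matrix.mem_unitaryGroup_iff.mp hHerm.eigenvectorUnitary.2
    have hdiag : Matrix.diagonal (RCLike.ofReal ∘ hHerm.eigenvalues)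
        = Matrix.diagonal hHerm.eigenvalues := by
      congr 1
    have e1 : x • (1 : Matrix {d : ℕ // d ∈ n.divisors} {d : ℕ // d ∈ n.divisors} ℝ) - A
        = V * (x • (1 : Matrix {d : ℕ // d ∈ n.divisors} {d : ℕ // d ∈ n.divisors} ℝ)
            - Matrix.diagonal hHerm.eigenvalues) * star V := by
      rw [Matrix.mul_sub, Matrix.sub_mul]
      congr 1
      · rw [Matrix.mul_smul, mul_one, Matrix.smul_mul, hVU]
      · conv_lhs => rw [hHerm.spectral_theorem]
        rw [hdiag, Unitary.conjStarAlgAut_apply]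
    have hdet1 : V.det * (star V).det = 1 := by
      rw [← Matrix.det_mul, hVU, Matrix.det_one]
    rw [e1, Matrix.det_mul, Matrix.det_mul]
    have e2 : x • (1 : Matrix {d : ℕ // d ∈ n.divisors} {d : ℕ // d ∈ n.divisors} ℝ)
        - Matrix.diagonal hHerm.eigenvalues
        = Matrix.diagonal (fun d => x - hHerm.eigenvalues d) := by
      ext i j
      by_cases h : i = j
      · subst h
        simp [Matrix.sub_apply, Matrix.smul_apply, Matrix.one_apply_eq,
          Matrix.diagonal_apply_eq, smul_eq_mul]
      · simp [Matrix.sub_apply, Matrix.smul_apply, Matrix.one_apply_ne h,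
          Matrix.diagonal_apply_ne _ h, smul_eq_mul]
    calc V.det * (x • 1 - Matrix.diagonal hHerm.eigenvalues).det * (star V).det
        = (V.det * (star V).det) *
            (x • (1 : Matrix {d : ℕ // d ∈ n.divisors} {d : ℕ // d ∈ n.divisors} ℝ)
              - Matrix.diagonal hHerm.eigenvalues).det := by ring
      _ = ∏ i, (x - hHerm.eigenvalues i) := by
          rw [hdet1, one_mul, e2, Matrix.det_diagonal]
  -- the two polynomials agree
  have hpq : (∏ i, (Polynomial.X - Polynomial.C (hHerm.eigenvalues i))) =
      Polynomial.X ^ (τ - 2^r) * ∏ ε, (Polynomial.X - Polynomial.C (lam ε)) := by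
    apply Polynomial.eq_of_infinite_eval_eq
    have hinf : ({x : ℝ | x ≠ 0}).Infinite := by
      have h1 : {x : ℝ | x ≠ 0} = ({0} : Set ℝ)ᶜ := by ext x; simp
      rw [h1]
      exact (Set.finite_singleton (0:ℝ)).infinite_compl
    refine hinf.mono ?_
    intro x hx
    simp only [Set.mem_setOf_eq] at hx ⊢
    simp only [Polynomial.eval_prod, Polynomial.eval_mul, Polynomial.eval_pow,
      Polynomial.eval_sub, Polynomial.eval_X, Polynomial.eval_C]
    rw [← hspec x, hdet x hx]
  -- roots of the two polynomials
  have hmono1 : (∏ i, (Polynomial.X - Polynomial.C (hHerm.eigenvalues i))).roots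
      = Finset.univ.val.map hHerm.eigenvalues := by
    have h1 : ∏ i, (Polynomial.X - Polynomial.C (hHerm.eigenvalues i))
        = ((Finset.univ.val.map hHerm.eigenvalues).map
            (fun t => Polynomial.X - Polynomial.C t)).prod := by
      rw [Multiset.map_map, Finset.prod_eq_multiset_prod]
      rfl
    rw [h1, Polynomial.roots_multiset_prod_X_sub_C]
  have hmono2 : (∏ ε, (Polynomial.X - Polynomial.C (lam ε))).roots
      = Finset.univ.val.map lam := by
    have h1 : ∏ ε, (Polynomial.X - Polynomial.C (lam ε))
        = ((Finset.univ.val.map lam).map (fun t => Polynomial.X - Polynomial.C t)).prod := by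
      rw [Multiset.map_map, Finset.prod_eq_multiset_prod]
      rfl
    rw [h1, Polynomial.roots_multiset_prod_X_sub_C]
  have hroots : Finset.univ.val.map hHerm.eigenvalues
      = (τ - 2^r) • ({0} : Multiset ℝ) + Finset.univ.val.map lam := by
    rw [← hmono1, hpq, Polynomial.roots_mul, Polynomial.roots_pow, Polynomial.roots_X, hmono2]
    exact mul_ne_zero (pow_ne_zero _ Polynomial.X_ne_zero)
      (Polynomial.monic_prod_of_monic _ _ fun i _ => Polynomial.monic_X_sub_C _).ne_zero
  -- transfer the sum along the multiset identity
  have hsum1 : ∑ i, |hHerm.eigenvalues i - 1/(τ:ℝ)|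
      = ((Finset.univ.val.map hHerm.eigenvalues).map (fun t => |t - 1/(τ:ℝ)|)).sum := by
    rw [Multiset.map_map, Finset.sum_eq_multiset_sum]
    rfl
  have hsum2 : ((Finset.univ.val.map lam).map (fun t => |t - 1/(τ:ℝ)|)).sum
      = ∑ ε, |lam ε - 1/(τ:ℝ)| := by
    rw [Multiset.map_map, Finset.sum_eq_multiset_sum]
    rfl
  -- the key sum over sign patterns
  have hτR : (τ:ℝ) = ∏ p : {p : ℕ // p ∈ n.primeFactors}, ((n.factorization p.1 : ℝ) + 1) := by
    rw [hτprod]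
    push_cast
    exact (Finset.prod_coe_sort n.primeFactors (fun p => (n.factorization p : ℝ) + 1)).symm
  have habs : ∀ ε, |lam ε| = ∏ p : {p : ℕ // p ∈ n.primeFactors},
      |MDPG.m (n.factorization p.1 : ℝ) (ε p)| := fun ε => by
    rw [hlam]; exact Finset.abs_prod _ _
  have hge : ∀ ε, 1/(τ:ℝ) ≤ |lam ε| := by
    intro ε
    rw [div_le_iff₀ (by positivity)]
    rw [habs, hτR, ← Finset.prod_mul_distrib]
    calc (1:ℝ) = ∏ _p : {p : ℕ // p ∈ n.primeFactors}, 1 := (Finset.prod_const_one).symm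
      _ ≤ _ := by
          refine Finset.prod_le_prod (fun p _ => zero_le_one) ?_
          intro p _
          exact MDPG.abs_mul_ge (hfac p) (ε p)
  have hterm : ∀ ε, |lam ε - 1/(τ:ℝ)| = |lam ε| -
      (∏ p : {p : ℕ // p ∈ n.primeFactors}, (if ε p = 0 then (1:ℝ) else -1)) * (1/(τ:ℝ)) := by
    intro ε
    have hsgn : lam ε
        = (∏ p : {p : ℕ // p ∈ n.primeFactors}, (if ε p = 0 then (1:ℝ) else -1)) * |lam ε| := by
      rw [habs, ← Finset.prod_mul_distrib, hlam]
      exact Finset.prod_congr rfl fun p _ => MDPG.m_sign (hfac p) (ε p)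
    have habs1 : (∏ p : {p : ℕ // p ∈ n.primeFactors}, (if ε p = 0 then (1:ℝ) else -1)) = 1 ∨
        (∏ p : {p : ℕ // p ∈ n.primeFactors}, (if ε p = 0 then (1:ℝ) else -1)) = -1 := by
      have h1 : |∏ p : {p : ℕ // p ∈ n.primeFactors}, (if ε p = 0 then (1:ℝ) else -1)| = 1 := by
        rw [Finset.abs_prod]
        refine Finset.prod_eq_one fun p _ => ?_
        by_cases h : ε p = 0 <;> simp [h]
      exact (abs_eq zero_le_one).mp h1
    rcases habs1 with h | h
    · rw [h, one_mul] at hsgn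
      have h2 : 0 ≤ lam ε - 1/(τ:ℝ) := by rw [hsgn]; linarith [hge ε]
      rw [h, one_mul, abs_of_nonneg h2]
      linarith [hsgn]
    · rw [h, neg_one_mul] at hsgn
      have h2 : lam ε - 1/(τ:ℝ) ≤ 0 := by
        rw [hsgn]; linarith [abs_nonneg (lam ε), hcpos]
      rw [h, abs_of_nonpos h2]
      linarith [hsgn]
  have hkey : ∑ ε, |lam ε - 1/(τ:ℝ)| =
      ∏ p ∈ n.primeFactors, Real.sqrt (4*(n.factorization p : ℝ)+1) := by
    rw [Finset.sum_congr rfl (fun ε _ => hterm ε), Finset.sum_sub_distrib]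
    have hs1 : ∑ ε : {p : ℕ // p ∈ n.primeFactors} → Fin 2, |lam ε|
        = ∏ p ∈ n.primeFactors, Real.sqrt (4*(n.factorization p : ℝ)+1) := by
      rw [Finset.sum_congr rfl (fun ε _ => habs ε),
        ← Fintype.prod_sum (κ := fun _ : {p : ℕ // p ∈ n.primeFactors} => Fin 2)
          (fun p i => |MDPG.m (n.factorization p.1 : ℝ) i|),
        ← Finset.prod_coe_sort n.primeFactors
          (fun p => Real.sqrt (4*(n.factorization p : ℝ)+1))]
      refine Finset.prod_congr rfl fun p _ => ?_
      rw [Fin.sum_univ_two]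
      exact MDPG.abs_sum (hfac p)
    have hs2 : ∑ ε : {p : ℕ // p ∈ n.primeFactors} → Fin 2,
        (∏ p : {p : ℕ // p ∈ n.primeFactors}, (if ε p = 0 then (1:ℝ) else -1)) * (1/(τ:ℝ))
          = 0 := by
      rw [← Finset.sum_mul]
      have h0 : ∑ ε : {p : ℕ // p ∈ n.primeFactors} → Fin 2,
          ∏ p : {p : ℕ // p ∈ n.primeFactors}, (if ε p = 0 then (1:ℝ) else -1) = 0 := by
        rw [← Fintype.prod_sum (κ := fun _ : {p : ℕ // p ∈ n.primeFactors} => Fin 2)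
          (fun _p (i : Fin 2) => if i = 0 then (1:ℝ) else -1)]
        obtain ⟨p0, hp0⟩ := Nat.nonempty_primeFactors.mpr hn
        refine Finset.prod_eq_zero (Finset.mem_univ (⟨p0, hp0⟩ :
          {p : ℕ // p ∈ n.primeFactors})) ?_
        rw [Fin.sum_univ_two]
        norm_num
      rw [h0, zero_mul]
    rw [hs1, hs2, sub_zero]
  -- final assembly
  rw [hsum1, hroots, Multiset.map_add, Multiset.sum_add, Multiset.nsmul_singleton,
    Multiset.map_replicate, Multiset.sum_replicate, hsum2, hkey]
  have hcast : ((τ - 2^r : ℕ) : ℝ) = (τ:ℝ) - 2^r := by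
    push_cast [Nat.cast_sub h2r]
    ring
  rw [nsmul_eq_mul, hcast]
  have hzero : |(0:ℝ) - 1/(τ:ℝ)| = 1/(τ:ℝ) := by
    rw [zero_sub, abs_neg, abs_of_pos hcpos]
  rw [hzero]
  field_simp
  ring
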